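/- Let r ≥ 0, let D ∈ D_n be a Dyck word, and let D' = Ψ_r(D). Then the number of tunnels of D with midpoint in x ≤ n+r (i.e., decompositions D = AuBdC with B a Dyck word and length(A) ≤ length(C) + 2r) equals the number of odd rises of D' in x > 2r (u-steps of D' at odd positions i with i > 2r) plus the number of u-steps of D' in positions i ≤ 2r. -/
import Mathlib


attribute [local instance] Classical.propDecidable

namespace DyckBij

/-- A word over `Bool` (`true` = up-step `u`, `false` = down-step `d`) is a Dyck word:
equally many `u`'s and `d`'s, and every prefix has at least as many `u`'s as `d`'s. -/
def IsDyck (w : List Bool) : Prop :=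
  w.count false = w.count true ∧
    ∀ p : List Bool, p <+: w → p.count false ≤ p.count true

/-- `Matched w i j`: the `u` at (0-indexed) position `i` of `w` is matched (as in matched
parentheses) with the `d` at position `j`, i.e. `w = A u B d C` with `B` a Dyck word,
`|A| = i` and `j = i + |B| + 1`. -/
def Matched (w : List Bool) (i j : ℕ) : Prop :=
  ∃ A B C : List Bool, IsDyck B ∧ w = A ++ true :: (B ++ false :: C) ∧
    A.length = i ∧ j = i + B.length + 1

/-- Positions `i` and `j` form a matched pair of steps of `w`. -/
def MatchPair (w : List Bool) (i j : ℕ) : Prop :=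
  Matched w i j ∨ Matched w j i

/-- The 0-indexed reading order `σ^{(r)}` on a word of length `L`: the first `2r` positions
are read in order, and the remaining positions are read in zigzag
`2r, L-1, 2r+1, L-2, …` (0-indexed). For `r = 0` this is the zigzag order `σ`. -/
def zigR (r L p : ℕ) : ℕ :=
  if p < 2 * r then p
  else if p % 2 = 0 then p / 2 + r
  else L + r - (p + 1) / 2

/-- The bijection `Ψ_r`: the `p`-th letter of `Ψ_r(w)` is `u` iff the match of the
`σ^{(r)}_p`-th step of `w` does not occur among the previously read steps
`σ^{(r)}_0, …, σ^{(r)}_{p-1}`. -/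
noncomputable def psiR (r : ℕ) (w : List Bool) : List Bool :=
  List.ofFn fun p : Fin w.length =>
    if ∃ p' : ℕ, p' < (p : ℕ) ∧
        MatchPair w (zigR r w.length p') (zigR r w.length (p : ℕ))
    then false else true

/-- The bijection `Ψ = Ψ_0`. -/
noncomputable def psi : List Bool → List Bool := psiR 0

/-- Number of tunnels of `w` with `|A| = |C| + 2r` (midpoint at `x = n + r`),
i.e. decompositions `w = A u B d C` with `B` a Dyck word; tunnels are indexed by `|A|`. -/
noncomputable def tunEq (r : ℕ) (w : List Bool) : ℕ :=
  {i : ℕ | ∃ A B C : List Bool, IsDyck B ∧ w = A ++ true :: (B ++ false :: C) ∧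
    A.length = i ∧ A.length = C.length + 2 * r}.ncard

/-- Number of tunnels of `w` with `|A| > |C| + 2r` (midpoint in `x > n + r`). -/
noncomputable def tunGt (r : ℕ) (w : List Bool) : ℕ :=
  {i : ℕ | ∃ A B C : List Bool, IsDyck B ∧ w = A ++ true :: (B ++ false :: C) ∧
    A.length = i ∧ C.length + 2 * r < A.length}.ncard

/-- Number of tunnels of `w` with `|A| ≤ |C| + 2r` (midpoint in `x ≤ n + r`). -/
noncomputable def tunLe (r : ℕ) (w : List Bool) : ℕ :=
  {i : ℕ | ∃ A B C : List Bool, IsDyck B ∧ w = A ++ true :: (B ++ false :: C) ∧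
    A.length = i ∧ A.length ≤ C.length + 2 * r}.ncard

/-- Number of centered tunnels `ct(w)`. -/
noncomputable def ctun (w : List Bool) : ℕ := tunEq 0 w

/-- Number of right tunnels `rt(w)`. -/
noncomputable def rtun (w : List Bool) : ℕ := tunGt 0 w

/-- Number of left tunnels `lt(w)`: tunnels with `|A| < |C|`. -/
noncomputable def ltun (w : List Bool) : ℕ :=
  {i : ℕ | ∃ A B C : List Bool, IsDyck B ∧ w = A ++ true :: (B ++ false :: C) ∧
    A.length = i ∧ A.length < C.length}.ncard

/-- Number of multitunnels of `w` with `|A| = |C| + 2r` (midpoint at `x = n + r`):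
decompositions `w = A B C` with `B` a nonempty Dyck word, indexed by `(|A|, |B|)`. -/
noncomputable def mtunEq (r : ℕ) (w : List Bool) : ℕ :=
  {q : ℕ × ℕ | ∃ A B C : List Bool, IsDyck B ∧ B ≠ [] ∧ w = A ++ B ++ C ∧
    A.length = q.1 ∧ B.length = q.2 ∧ A.length = C.length + 2 * r}.ncard

/-- Number of centered multitunnels `cmt(w)`. -/
noncomputable def cmtun (w : List Bool) : ℕ := mtunEq 0 w

/-- Number of hills `h(w)`: decompositions `w = X u d Y` with `X, Y` Dyck words. -/
noncomputable def numHills (w : List Bool) : ℕ :=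
  {i : ℕ | ∃ X Y : List Bool, IsDyck X ∧ IsDyck Y ∧
    w = X ++ true :: false :: Y ∧ X.length = i}.ncard

/-- Number of hills of `w` lying in `x > 2r`, i.e. with `|X| ≥ 2r`. -/
noncomputable def numHillsAfter (r : ℕ) (w : List Bool) : ℕ :=
  {i : ℕ | ∃ X Y : List Bool, IsDyck X ∧ IsDyck Y ∧
    w = X ++ true :: false :: Y ∧ X.length = i ∧ 2 * r ≤ X.length}.ncard

/-- Number of arches (equivalently, returns) `ret(w)`: decompositions
`w = X (u B d) Y` with `X, B, Y` Dyck words. -/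
noncomputable def numArches (w : List Bool) : ℕ :=
  {i : ℕ | ∃ X B Y : List Bool, IsDyck X ∧ IsDyck B ∧ IsDyck Y ∧
    w = X ++ true :: (B ++ false :: Y) ∧ X.length = i}.ncard

/-- Number of arches of `w` lying in `x ≥ 2r`, i.e. with `|X| ≥ 2r`. -/
noncomputable def numArchesAfter (r : ℕ) (w : List Bool) : ℕ :=
  {i : ℕ | ∃ X B Y : List Bool, IsDyck X ∧ IsDyck B ∧ IsDyck Y ∧
    w = X ++ true :: (B ++ false :: Y) ∧ X.length = i ∧ 2 * r ≤ X.length}.ncard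

/-- Number of odd rises `odr(w)`: `u`-steps at odd 1-indexed positions
(even 0-indexed positions). -/
noncomputable def oddRises (w : List Bool) : ℕ :=
  {p : ℕ | p < w.length ∧ p % 2 = 0 ∧ w.getD p false = true}.ncard

/-- Number of even rises `er(w)`: `u`-steps at even 1-indexed positions
(odd 0-indexed positions). -/
noncomputable def evenRises (w : List Bool) : ℕ :=
  {p : ℕ | p < w.length ∧ p % 2 = 1 ∧ w.getD p false = true}.ncard

/-- Number of odd rises of `w` at 1-indexed positions `> 2r`. -/
noncomputable def oddRisesAfter (r : ℕ) (w : List Bool) : ℕ :=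
  {p : ℕ | p < w.length ∧ p % 2 = 0 ∧ 2 * r ≤ p ∧ w.getD p false = true}.ncard

/-- Number of even rises of `w` at 1-indexed positions `> 2r`. -/
noncomputable def evenRisesAfter (r : ℕ) (w : List Bool) : ℕ :=
  {p : ℕ | p < w.length ∧ p % 2 = 1 ∧ 2 * r ≤ p ∧ w.getD p false = true}.ncard

/-- Number of `u`-steps of `w` at 1-indexed positions `≤ 2r`. -/
noncomputable def upstepsBefore (r : ℕ) (w : List Bool) : ℕ :=
  {p : ℕ | p < w.length ∧ p < 2 * r ∧ w.getD p false = true}.ncard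

/-- Number of peaks of `w`: occurrences of the factor `u d`. -/
noncomputable def numPeaks (w : List Bool) : ℕ :=
  {i : ℕ | i + 2 ≤ w.length ∧ w.getD i false = true ∧ w.getD (i + 1) true = false}.ncard

/-- Number of occurrences in `w` of a factor of length 3 beginning with `u`
and ending with `d` (occurrences of `u⋆d`). -/
noncomputable def numUStarD (w : List Bool) : ℕ :=
  {i : ℕ | i + 3 ≤ w.length ∧ w.getD i false = true ∧ w.getD (i + 2) true = false}.ncard

/-- `ih(w)`: 1 if `w` begins with the factor `u d`, else 0. -/
noncomputable def initHill (w : List Bool) : ℕ :=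
  if w.take 2 = [true, false] then 1 else 0

/-- `fh(w)`: 1 if `w = X u d` with `X` a Dyck word, else 0. -/
noncomputable def finHill (w : List Bool) : ℕ :=
  if ∃ X : List Bool, IsDyck X ∧ w = X ++ [true, false] then 1 else 0

/-- `π` avoids the pattern 321. -/
def Avoids321 {n : ℕ} (π : Equiv.Perm (Fin n)) : Prop :=
  ¬ ∃ i j k : Fin n, i < j ∧ j < k ∧ π k < π j ∧ π j < π i

/-- `π` avoids the pattern 132. -/
def Avoids132 {n : ℕ} (π : Equiv.Perm (Fin n)) : Prop :=
  ¬ ∃ i j k : Fin n, i < j ∧ j < k ∧ π i < π k ∧ π k < π j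

/-- Number of fixed points of `π`. -/
noncomputable def fixedPts {n : ℕ} (π : Equiv.Perm (Fin n)) : ℕ :=
  {i : Fin n | π i = i}.ncard

/-- Number of excedances of `π`. -/
noncomputable def excedances {n : ℕ} (π : Equiv.Perm (Fin n)) : ℕ :=
  {i : Fin n | i < π i}.ncard

/-- Number of descents of `π`. -/
noncomputable def descents {n : ℕ} (π : Equiv.Perm (Fin n)) : ℕ :=
  {i : ℕ | ∃ (h1 : i < n) (h2 : i + 1 < n), π ⟨i + 1, h2⟩ < π ⟨i, h1⟩}.ncard

/-- `α_r(π) = #{i : π(i) = i + r}` (stated 0-indexed, equivalent to the 1-indexed version). -/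
noncomputable def alphaStat {n : ℕ} (r : ℕ) (π : Equiv.Perm (Fin n)) : ℕ :=
  {i : Fin n | (π i : ℕ) = (i : ℕ) + r}.ncard

/-- `β_r(π) = #{i : i > r, π(i) = i}` (for 1-indexed `i`; 0-indexed this is `r ≤ i`). -/
noncomputable def betaStat {n : ℕ} (r : ℕ) (π : Equiv.Perm (Fin n)) : ℕ :=
  {i : Fin n | r ≤ (i : ℕ) ∧ π i = i}.ncard


/-! ### Auxiliary lemmas -/

section Aux

lemma getD_append_right' (l l' : List Bool) (n : ℕ) (h : l.length ≤ n) :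
    (l ++ l').getD n false = l'.getD (n - l.length) false := by
  simp [List.getD_eq_getElem?_getD, List.getElem?_append_right h]

lemma length_of_decomp {w A B C : List Bool}
    (hw : w = A ++ true :: (B ++ false :: C)) :
    w.length = A.length + B.length + C.length + 2 := by
  subst hw; simp only [List.length_append, List.length_cons]; omega

lemma Matched.facts {w : List Bool} {i j : ℕ} (h : Matched w i j) :
    i < j ∧ j < w.length ∧ w.getD i false = true ∧ w.getD j false = false := by
  obtain ⟨A, B, C, hB, hw, hA, hj⟩ := h
  subst hA; subst hj
  have hlen := length_of_decomp hw
  refine ⟨by omega, by omega, ?_, ?_⟩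
  · rw [hw, getD_append_right' _ _ _ le_rfl]
    simp
  · have hw2 : w = (A ++ true :: B) ++ false :: C := by rw [hw]; simp
    have hl2 : (A ++ true :: B).length = A.length + B.length + 1 := by
      simp only [List.length_append, List.length_cons]; omega
    rw [hw2, ← hl2, getD_append_right' _ _ _ le_rfl]
    simp

lemma matched_key_aux {B₁ B₂ C₁ C₂ : List Bool} (hB₁ : IsDyck B₁) (hB₂ : IsDyck B₂)
    (heq : B₁ ++ false :: C₁ = B₂ ++ false :: C₂) (hlt : B₁.length < B₂.length) : False := by
  have hpre : B₁ ++ [false] <+: B₂ := by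
    apply List.prefix_of_prefix_length_le (l₂ := B₂) (l₃ := B₂ ++ false :: C₂)
    · rw [← heq]
      exact ⟨C₁, by simp⟩
    · exact List.prefix_append _ _
    · simp only [List.length_append, List.length_singleton]; omega
  have hcnt := hB₂.2 _ hpre
  simp only [List.count_append] at hcnt
  have h1 : ([false] : List Bool).count false = 1 := by decide
  have h2 : ([false] : List Bool).count true = 0 := by decide
  rw [h1, h2] at hcnt
  have hb1 := hB₁.1
  omega

lemma Matched.uniq_right {w : List Bool} {i j j' : ℕ}
    (h1 : Matched w i j) (h2 : Matched w i j') : j = j' := by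
  obtain ⟨A, B, C, hB, hw, hA, hj⟩ := h1
  obtain ⟨A', B', C', hB', hw', hA', hj'⟩ := h2
  have hAA : A = A' := by
    have t1 : w.take i = A := by rw [hw, ← hA, List.take_left]
    have t2 : w.take i = A' := by rw [hw', ← hA', List.take_left]
    rw [← t1, t2]
  subst hAA
  have hX : B ++ false :: C = B' ++ false :: C' := by
    have h := hw.symm.trans hw'
    rw [List.append_cancel_left_eq] at h
    exact List.cons_injective h
  rcases Nat.lt_trichotomy B.length B'.length with h | h | h
  · exact (matched_key_aux hB hB' hX h).elim
  · omega
  · exact (matched_key_aux hB' hB hX.symm h).elim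

lemma Matched.uniq_left_aux {w : List Bool} {i i' j : ℕ}
    (h1 : Matched w i j) (h2 : Matched w i' j) (hlt : i < i') : False := by
  obtain ⟨A, B, C, hB, hw, hA, hj⟩ := h1
  obtain ⟨A', B', C', hB', hw', hA', hj'⟩ := h2
  have d1 : w.drop (i+1) = B ++ false :: C := by
    rw [hw, show A ++ true :: (B ++ false :: C) = (A ++ [true]) ++ (B ++ false :: C) by simp,
      show i + 1 = (A ++ [true]).length by simp [hA], List.drop_left]
  have e1 : w.drop (i+1) = A'.drop (i+1) ++ true :: (B' ++ false :: C') := by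
    rw [hw', List.drop_append, show i + 1 - A'.length = 0 by omega,
      List.drop_zero]
  have hEq : B ++ (false :: C) = (A'.drop (i+1) ++ true :: B') ++ (false :: C') := by
    rw [← d1, e1]; simp
  have hlen : B.length = (A'.drop (i+1) ++ true :: B').length := by
    simp only [List.length_append, List.length_cons, List.length_drop]
    omega
  obtain ⟨hBE, -⟩ := List.append_inj hEq hlen
  set E := A'.drop (i+1) with hE
  have hpre : E <+: B := ⟨true :: B', hBE.symm⟩
  have hcnt := hB.2 _ hpre
  have hc1 : B.count false = E.count false + B'.count false := by
    rw [hBE]; simp [List.count_append, List.count_cons]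
  have hc2 : B.count true = E.count true + B'.count true + 1 := by
    rw [hBE]; simp [List.count_append, List.count_cons]; omega
  have hb1 := hB.1
  have hb2 := hB'.1
  omega

lemma Matched.uniq_left {w : List Bool} {i i' j : ℕ}
    (h1 : Matched w i j) (h2 : Matched w i' j) : i = i' := by
  rcases Nat.lt_trichotomy i i' with h | h | h
  · exact (Matched.uniq_left_aux h1 h2 h).elim
  · exact h
  · exact (Matched.uniq_left_aux h2 h1 h).elim

lemma exists_match_of_true {w : List Bool} {i : ℕ} (hw : IsDyck w)
    (hi : i < w.length) (ht : w.getD i false = true) : ∃ j, Matched w i j := by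
  classical
  set A := w.take i with hA
  set T := w.drop (i+1) with hT
  have hwi : w[i] = true := by rw [List.getD_eq_getElem _ _ hi] at ht; exact ht
  have hdec : w = A ++ true :: T := by
    conv_lhs => rw [← List.take_append_drop i w]
    rw [List.drop_eq_getElem_cons hi, hwi, hA, hT]
  have hAl : A.length = i := by rw [hA]; simp; omega
  have hcf : w.count false = A.count false + T.count false := by
    rw [hdec]; simp [List.count_append, List.count_cons]
  have hct : w.count true = A.count true + T.count true + 1 := by
    rw [hdec]; simp [List.count_append, List.count_cons]; omega
  have hpA : A.count false ≤ A.count true := hw.2 A (by rw [hA]; exact List.take_prefix i w)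
  have hwc := hw.1
  have hTc : T.count true + 1 ≤ T.count false := by omega
  have hPlen : (T.take T.length).count true < (T.take T.length).count false := by
    rw [List.take_length]; omega
  have hex : ∃ k, (T.take k).count true < (T.take k).count false := ⟨T.length, hPlen⟩
  set k := Nat.find hex with hkdef
  have hks : (T.take k).count true < (T.take k).count false := Nat.find_spec hex
  have hkmin : ∀ m, m < k → ¬ (T.take m).count true < (T.take m).count false :=
    fun m hm => Nat.find_min hex hm
  have hkle : k ≤ T.length := Nat.find_min' hex hPlen
  clear_value k
  have hk0 : k ≠ 0 := by rintro rfl; simp at hks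
  obtain ⟨k', rfl⟩ : ∃ k', k = k' + 1 := ⟨k - 1, by omega⟩
  have hk'lt : k' < T.length := by omega
  have htake : T.take (k'+1) = T.take k' ++ [T[k']] := by
    rw [List.take_succ, List.getElem?_eq_getElem hk'lt]; rfl
  have hprev := hkmin k' (by omega)
  have hlast : T[k'] = false := by
    rcases Bool.eq_false_or_eq_true T[k'] with h | h
    · exfalso
      rw [htake, h] at hks
      simp only [List.count_append] at hks
      have e1 : ([true] : List Bool).count false = 0 := by decide
      have e2 : ([true] : List Bool).count true = 1 := by decide
      rw [e1, e2] at hks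
      omega
    · exact h
  have hksc : (T.take k').count true < (T.take k').count false + 1 := by
    rw [htake, hlast] at hks
    simp only [List.count_append] at hks
    have e1 : ([false] : List Bool).count false = 1 := by decide
    have e2 : ([false] : List Bool).count true = 0 := by decide
    rw [e1, e2] at hks
    omega
  have hBdyck : IsDyck (T.take k') := by
    constructor
    · omega
    · intro p hp
      set t := p.length with htdef
      have h1 : p = (T.take k').take t := List.prefix_iff_eq_take.mp hp
      have h2 : p = T.take (min t k') := by rw [h1, List.take_take]
      have h3 := hkmin (min t k') (by omega)
      rw [h2]
      omega
  have hsplit : T = T.take k' ++ false :: T.drop (k'+1) := by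
    conv_lhs => rw [← List.take_append_drop k' T]
    rw [List.drop_eq_getElem_cons hk'lt, hlast]
  refine ⟨i + k' + 1, A, T.take k', T.drop (k'+1), hBdyck, ?_, hAl, ?_⟩
  · rw [hdec]
    conv_lhs => rw [hsplit]
  · have : (T.take k').length = k' := by simp; omega
    omega

lemma exists_match_of_false {w : List Bool} {j : ℕ} (hw : IsDyck w)
    (hj : j < w.length) (hf : w.getD j false = false) : ∃ i, Matched w i j := by
  classical
  set P := w.take j with hPdef
  set C := w.drop (j+1) with hCdef
  have hwj : w[j] = false := by rw [List.getD_eq_getElem _ _ hj] at hf; exact hf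
  have hdec : w = P ++ false :: C := by
    conv_lhs => rw [← List.take_append_drop j w]
    rw [List.drop_eq_getElem_cons hj, hwj, hPdef, hCdef]
  have hPl : P.length = j := by rw [hPdef]; simp; omega
  have ht1 : w.take (j+1) = P ++ [false] := by
    rw [List.take_succ, List.getElem?_eq_getElem hj, hwj, hPdef]; rfl
  have hpre : P ++ [false] <+: w := by rw [← ht1]; exact List.take_prefix _ _
  have hPc : P.count false + 1 ≤ P.count true := by
    have h := hw.2 _ hpre
    simp only [List.count_append] at h
    have e1 : ([false] : List Bool).count false = 1 := by decide
    have e2 : ([false] : List Bool).count true = 0 := by decide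
    rw [e1, e2] at h
    omega
  have hQ0 : (P.drop 0).count false < (P.drop 0).count true := by
    simp only [List.drop_zero]; omega
  set m := Nat.findGreatest (fun m => (P.drop m).count false < (P.drop m).count true) P.length
    with hmdef
  have hmQ : (P.drop m).count false < (P.drop m).count true := by
    rw [hmdef]
    exact Nat.findGreatest_spec
      (P := fun k => (P.drop k).count false < (P.drop k).count true) (Nat.zero_le _) hQ0
  have hmle : m ≤ P.length := by
    rw [hmdef]
    exact Nat.findGreatest_le _
  have hmax : ∀ m', m < m' → ¬ (P.drop m').count false < (P.drop m').count true := by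
    intro m' hm'
    rcases le_or_gt m' P.length with h | h
    · rw [hmdef] at hm'
      exact Nat.findGreatest_is_greatest
        (P := fun k => (P.drop k).count false < (P.drop k).count true) hm' h
    · rw [List.drop_eq_nil_of_le (le_of_lt h)]
      simp
  clear_value m
  have hmlt : m < P.length := by
    rcases eq_or_lt_of_le hmle with h | h
    · exfalso; rw [h, List.drop_length] at hmQ; simp at hmQ
    · exact h
  have hd : P.drop m = P[m] :: P.drop (m+1) := List.drop_eq_getElem_cons hmlt
  have hnext := hmax (m+1) (by omega)
  have hPm : P[m] = true := by
    rcases Bool.eq_false_or_eq_true P[m] with h | h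
    · exact h
    · exfalso
      rw [hd, h] at hmQ
      simp only [List.count_cons] at hmQ
      simp at hmQ
      omega
  set B := P.drop (m+1) with hBdef
  have hdP : P.drop m = true :: B := by rw [hd, hPm]
  have hmQ' : B.count false < B.count true + 1 := by
    rw [hdP] at hmQ
    simp only [List.count_cons] at hmQ
    simp at hmQ
    omega
  have hBbal : B.count false = B.count true := by omega
  have hBdyck : IsDyck B := by
    refine ⟨hBbal, ?_⟩
    intro p hp
    set t := p.length with htdef
    have h1 : p = B.take t := List.prefix_iff_eq_take.mp hp
    have h4 : (B.take t).count false + (B.drop t).count false = B.count false := by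
      rw [← List.count_append, List.take_append_drop]
    have h5 : (B.take t).count true + (B.drop t).count true = B.count true := by
      rw [← List.count_append, List.take_append_drop]
    have h6 : B.drop t = P.drop (m+1+t) := by
      rw [hBdef, List.drop_drop]
    have h3 := hmax (m+1+t) (by omega)
    rw [h6] at h4 h5
    rw [h1]
    omega
  have hP2 : P = P.take m ++ true :: B := by
    conv_lhs => rw [← List.take_append_drop m P]
    rw [hdP]
  refine ⟨m, P.take m, B, C, hBdyck, ?_, ?_, ?_⟩
  · rw [hdec]
    conv_lhs => rw [hP2]
    simp
  · simp; omega
  · have hBl : B.length = j - m - 1 := by rw [hBdef]; simp; omega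
    have : (P.take m).length = m := by simp; omega
    omega

lemma psiR_length (r : ℕ) (w : List Bool) : (psiR r w).length = w.length := by
  simp [psiR]

lemma psiR_getD (r : ℕ) (w : List Bool) (p : ℕ) (hp : p < w.length) :
    (psiR r w).getD p false =
      if ∃ p' : ℕ, p' < p ∧ MatchPair w (zigR r w.length p') (zigR r w.length p)
      then false else true := by
  have hp' : p < (psiR r w).length := by rwa [psiR_length]
  rw [List.getD_eq_getElem _ _ hp']
  simp only [psiR, List.getElem_ofFn]

lemma zig_image (r L p m : ℕ) (h2 : p % 2 = 0) (hr : 2*r ≤ p) (hp : p < L) (hm : m < L) :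
    (∃ p', p' < p ∧ zigR r L p' = m) ↔ (m < p/2 + r ∨ L + r ≤ m + p/2) := by
  constructor
  · rintro ⟨p', hp', rfl⟩
    unfold zigR
    split_ifs <;> omega
  · intro h
    rcases h with h | h
    · rcases lt_or_ge m (2*r) with h' | h'
      · exact ⟨m, by omega, by unfold zigR; rw [if_pos h']⟩
      · refine ⟨2*(m-r), by omega, ?_⟩
        unfold zigR
        rw [if_neg (by omega), if_pos (by omega)]
        omega
    · refine ⟨2*(L + r - m) - 1, by omega, ?_⟩
      unfold zigR
      rw [if_neg (by omega), if_neg (by omega)]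
      omega

lemma psiR_getD_lt (r : ℕ) {w : List Bool} (hw : IsDyck w) {p : ℕ}
    (hp : p < w.length) (hr : p < 2*r) :
    (psiR r w).getD p false = w.getD p false := by
  rw [psiR_getD r w p hp]
  have hz : zigR r w.length p = p := by unfold zigR; rw [if_pos hr]
  rcases Bool.eq_false_or_eq_true (w.getD p false) with h | h
  · rw [h, if_neg]
    rintro ⟨p', hp', hmp⟩
    rw [hz] at hmp
    have hzp' : zigR r w.length p' = p' := by unfold zigR; rw [if_pos (by omega)]
    rw [hzp'] at hmp
    rcases hmp with hm | hm
    · have h1 := hm.facts.2.2.2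
      rw [h] at h1
      exact absurd h1 (by simp)
    · exact absurd hm.facts.1 (by omega)
  · rw [h, if_pos]
    obtain ⟨i, hi⟩ := exists_match_of_false hw hp h
    have hfacts := hi.facts
    refine ⟨i, hfacts.1, ?_⟩
    have hzi : zigR r w.length i = i := by
      unfold zigR; rw [if_pos (by omega)]
    rw [hz, hzi]
    exact Or.inl hi

lemma psiR_getD_even (r : ℕ) {w : List Bool} (hw : IsDyck w) {p : ℕ}
    (hp : p < w.length) (h2 : p % 2 = 0) (hr : 2*r ≤ p) :
    ((psiR r w).getD p false = true ↔
      ∃ m, Matched w (p/2 + r) m ∧ m + p/2 < w.length + r) := by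
  have hz : zigR r w.length p = p/2 + r := by
    unfold zigR; rw [if_neg (by omega), if_pos h2]
  have hqL : p/2 + r < w.length := by omega
  rw [psiR_getD r w p hp, hz]
  constructor
  · intro h
    by_cases hc : ∃ p', p' < p ∧ MatchPair w (zigR r w.length p') (p/2+r)
    · rw [if_pos hc] at h; exact absurd h (by simp)
    · rcases Bool.eq_false_or_eq_true (w.getD (p/2+r) false) with hq | hq
      · obtain ⟨m, hm⟩ := exists_match_of_true hw hqL hq
        refine ⟨m, hm, ?_⟩
        by_contra hge
        apply hc
        have hmL : m < w.length := hm.facts.2.1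
        obtain ⟨p', hp', hzp'⟩ :=
          (zig_image r w.length p m h2 hr hp hmL).mpr (Or.inr (by omega))
        exact ⟨p', hp', by rw [hzp']; exact Or.inr hm⟩
      · obtain ⟨i, hi⟩ := exists_match_of_false hw hqL hq
        exfalso; apply hc
        have him : i < p/2 + r := hi.facts.1
        obtain ⟨p', hp', hzp'⟩ :=
          (zig_image r w.length p i h2 hr hp (by omega)).mpr (Or.inl him)
        exact ⟨p', hp', by rw [hzp']; exact Or.inl hi⟩
  · rintro ⟨m, hm, hlt⟩
    rw [if_neg]
    rintro ⟨p', hp', hmp⟩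
    rcases hmp with hm' | hm'
    · have hf1 := hm'.facts.2.2.2
      have hf2 := hm.facts.2.2.1
      rw [hf2] at hf1
      exact absurd hf1 (by simp)
    · have hme : zigR r w.length p' = m := Matched.uniq_right hm' hm
      have hmL : m < w.length := hm.facts.2.1
      have hmem := (zig_image r w.length p m h2 hr hp hmL).mp ⟨p', hp', hme⟩
      have hij : p/2 + r < m := hm.facts.1
      omega

end Aux

/-- tunnels of `D ∈ D_n` with midpoint in `x ≤ n + r` (i.e. `|A| ≤ |C| + 2r`)
correspond in number to odd rises of `D' = Ψ_r(D)` at 1-indexed odd positions `> 2r`,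
plus `u`-steps of `D'` at positions `≤ 2r`. -/
theorem tunLe_eq_oddRisesAfter_add_upstepsBefore (r n : ℕ) (D : List Bool) (hD : IsDyck D)
    (hlen : D.length = 2 * n) :
    tunLe r D = oddRisesAfter r (psiR r D) + upstepsBefore r (psiR r D) := by
  classical
  set T1 : Set ℕ := {i | (∃ j, Matched D i j) ∧ i < 2*r} with hT1
  set T2 : Set ℕ := {i | ∃ j, Matched D i j ∧ i + j + 1 ≤ D.length + 2*r ∧ 2*r ≤ i} with hT2
  have hT1sub : T1 ⊆ Set.Iio D.length := by
    rintro i ⟨⟨j, hj⟩, -⟩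
    exact lt_trans hj.facts.1 hj.facts.2.1
  have hT2sub : T2 ⊆ Set.Iio D.length := by
    rintro i ⟨j, hj, -, -⟩
    exact lt_trans hj.facts.1 hj.facts.2.1
  have hT1fin : T1.Finite := (Set.finite_Iio D.length).subset hT1sub
  have hT2fin : T2.Finite := (Set.finite_Iio D.length).subset hT2sub
  have htun : {i : ℕ | ∃ A B C : List Bool, IsDyck B ∧ D = A ++ true :: (B ++ false :: C) ∧
      A.length = i ∧ A.length ≤ C.length + 2 * r} = T1 ∪ T2 := by
    ext i
    simp only [hT1, hT2, Set.mem_setOf_eq, Set.mem_union]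
    constructor
    · rintro ⟨A, B, C, hB, hw, hA, hle⟩
      have hl := length_of_decomp hw
      have hM : Matched D i (i + B.length + 1) := ⟨A, B, C, hB, hw, hA, rfl⟩
      rcases lt_or_ge i (2*r) with h | h
      · exact Or.inl ⟨⟨_, hM⟩, h⟩
      · exact Or.inr ⟨_, hM, by omega, h⟩
    · rintro (⟨⟨j, hj⟩, hlt⟩ | ⟨j, hj, hle, hge⟩)
      · obtain ⟨A, B, C, hB, hw, hA, hjj⟩ := hj
        exact ⟨A, B, C, hB, hw, hA, by have := length_of_decomp hw; omega⟩
      · obtain ⟨A, B, C, hB, hw, hA, hjj⟩ := hj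
        exact ⟨A, B, C, hB, hw, hA, by have := length_of_decomp hw; omega⟩
  have hdisj : Disjoint T1 T2 := by
    rw [Set.disjoint_left]
    rintro i ⟨-, hlt⟩ ⟨j, -, -, hge⟩
    omega
  have hup : {p : ℕ | p < (psiR r D).length ∧ p < 2 * r ∧ (psiR r D).getD p false = true}
      = T1 := by
    ext p
    simp only [hT1, Set.mem_setOf_eq, psiR_length]
    constructor
    · rintro ⟨hpL, hp2r, hgd⟩
      rw [psiR_getD_lt r hD hpL hp2r] at hgd
      obtain ⟨j, hj⟩ := exists_match_of_true hD hpL hgd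
      exact ⟨⟨j, hj⟩, hp2r⟩
    · rintro ⟨⟨j, hj⟩, hp2r⟩
      have hf := hj.facts
      have hpL : p < D.length := lt_trans hf.1 hf.2.1
      exact ⟨hpL, hp2r, by rw [psiR_getD_lt r hD hpL hp2r]; exact hf.2.2.1⟩
  have hodd : {p : ℕ | p < (psiR r D).length ∧ p % 2 = 0 ∧ 2 * r ≤ p ∧
      (psiR r D).getD p false = true} = (fun i => 2*i - 2*r) '' T2 := by
    ext p
    simp only [hT2, Set.mem_setOf_eq, psiR_length, Set.mem_image]
    constructor
    · rintro ⟨hpL, hp2, hpr, hgd⟩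
      rw [psiR_getD_even r hD hpL hp2 hpr] at hgd
      obtain ⟨m, hm, hsm⟩ := hgd
      have hij : p/2 + r < m := hm.facts.1
      exact ⟨p/2 + r, ⟨m, hm, by omega, by omega⟩, by omega⟩
    · rintro ⟨i, ⟨j, hj, hle, hge⟩, rfl⟩
      have hf := hj.facts
      have hjL : j < D.length := hf.2.1
      have hij : i < j := hf.1
      have hp2 : (2*i - 2*r) % 2 = 0 := by omega
      have hpr : 2*r ≤ 2*i - 2*r := by omega
      have hpL : 2*i - 2*r < D.length := by omega
      refine ⟨hpL, hp2, hpr, ?_⟩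
      rw [psiR_getD_even r hD hpL hp2 hpr]
      have hq : (2*i - 2*r)/2 + r = i := by omega
      rw [hq]
      exact ⟨j, hj, by omega⟩
  have hinj : Set.InjOn (fun i => 2*i - 2*r) T2 := by
    rintro a ⟨j, -, -, ha⟩ b ⟨j', -, -, hb⟩ hab
    simp only at hab
    omega
  unfold tunLe oddRisesAfter upstepsBefore
  rw [htun, Set.ncard_union_eq hdisj hT1fin hT2fin, hup, hodd,
    Set.ncard_image_of_injOn hinj]
  omega

end DyckBij
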